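/- There is a bijection between the set of pairs (M, P), where M is a Motzkin path of order n and P is a hump of M, and the set of super Motzkin paths of order n whose first non-flat step is an up-step. -/

import Mathlib

inductive MStep | U | F | D
deriving DecidableEq

def IsSuperMotzkin (w : List MStep) : Prop :=
  w.count MStep.U = w.count MStep.D

def IsMotzkin (w : List MStep) : Prop :=
  IsSuperMotzkin w ∧ ∀ p, p <+: w → p.count MStep.D ≤ p.count MStep.U

def IsHumpAt (w : List MStep) (i : ℕ) : Prop :=
  ∃ k, w[i]? = some MStep.U ∧ (∀ j < k, w[i + 1 + j]? = some MStep.F) ∧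
    w[i + 1 + k]? = some MStep.D

/-- The first non-flat step of `w` exists and is a `U`. -/
def FirstNonFlatIsU (w : List MStep) : Prop :=
  ∃ p s, w = p ++ MStep.U :: s ∧ ∀ x ∈ p, x = MStep.F

namespace HumpBij

abbrev W := List MStep

/-- signed defect: #D - #U -/
def δ (l : W) : ℤ := (l.count MStep.D : ℤ) - (l.count MStep.U : ℤ)

lemma δ_append (l m : W) : δ (l ++ m) = δ l + δ m := by
  simp only [δ, List.count_append]; push_cast; ring

lemma δ_U : δ [MStep.U] = -1 := by decide
lemma δ_F : δ [MStep.F] = 0 := by decide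
lemma δ_D : δ [MStep.D] = 1 := by decide
lemma δ_nil : δ [] = 0 := by decide

lemma δ_append_cons (X : W) (c : MStep) (Y : W) :
    δ (X ++ c :: Y) = δ X + δ [c] + δ Y := by
  rw [show X ++ c :: Y = X ++ ([c] ++ Y) by simp, δ_append, δ_append]; ring

lemma δ_replicateF (k : ℕ) : δ (List.replicate k MStep.F) = 0 := by
  induction k with
  | zero => rfl
  | succ k ih =>
    rw [List.replicate_succ, show (MStep.F :: List.replicate k MStep.F)
      = [MStep.F] ++ List.replicate k MStep.F by simp, δ_append, ih, δ_F]
    omega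

lemma eq_D_of_δ_pos (c : MStep) (h : 0 < δ [c]) : c = MStep.D := by
  rcases c with _ | _ | _
  · rw [δ_U] at h; omega
  · rw [δ_F] at h; omega
  · rfl

lemma super_iff_δ (w : W) : IsSuperMotzkin w ↔ δ w = 0 := by
  unfold IsSuperMotzkin δ; omega

lemma prefix_δ_of_motzkin {M : W} (hM : IsMotzkin M) {q : W} (h : q <+: M) : δ q ≤ 0 := by
  have := hM.2 q h; unfold δ; omega

/-! ### helper list lemmas -/

lemma take_len_append (X Y : W) (m : ℕ) (h : X.length = m) : (X ++ Y).take m = X := by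
  subst h; exact List.take_left

lemma drop_len_append (X Y : W) (m : ℕ) (h : X.length = m) : (X ++ Y).drop m = Y := by
  subst h; exact List.drop_left

lemma take_append_le (A X : W) (m : ℕ) (h : m ≤ A.length) :
    (A ++ X).take m = A.take m := by
  rw [List.take_append, Nat.sub_eq_zero_of_le h]; simp

lemma take_append_add (A X : W) (n : ℕ) :
    (A ++ X).take (A.length + n) = A ++ X.take n := by
  rw [List.take_append, List.take_of_length_le (by omega),
    Nat.add_sub_cancel_left]

lemma getElem?_add_append (A X : W) (n : ℕ) : (A ++ X)[A.length + n]? = X[n]? := by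
  rw [List.getElem?_append_right (by omega), Nat.add_sub_cancel_left]

lemma drop_of_getElem? (M : W) (n : ℕ) (x : MStep) (h : M[n]? = some x) :
    M.drop n = x :: M.drop (n+1) := by
  obtain ⟨hlt, he⟩ := List.getElem?_eq_some_iff.mp h
  rw [List.drop_eq_getElem_cons hlt, he]

lemma drop_flat (M : W) (s k : ℕ) (hF : ∀ j < k, M[s + j]? = some MStep.F) :
    M.drop s = List.replicate k MStep.F ++ M.drop (s + k) := by
  induction k with
  | zero => simp
  | succ k ih =>
    rw [ih (fun j hj => hF j (by omega)), List.replicate_succ' (n := k),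
      drop_of_getElem? M (s + k) MStep.F (hF k (by omega))]
    simp [show s + (k+1) = s + k + 1 by omega]

lemma takeWhile_flat (p s : W) (hp : ∀ x ∈ p, x = MStep.F) :
    (p ++ MStep.U :: s).takeWhile (fun x => x == MStep.F) = p := by
  induction p with
  | nil => rfl
  | cons a p ih =>
    have ha : a = MStep.F := hp a (by simp)
    subst ha
    simp only [List.cons_append, List.takeWhile_cons]
    rw [ih (fun x hx => hp x (by simp [hx]))]
    rfl

lemma flat_eq_replicate (p : W) (hp : ∀ x ∈ p, x = MStep.F) :
    p = List.replicate p.length MStep.F := by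
  induction p with
  | nil => rfl
  | cons a p ih =>
    have ha : a = MStep.F := hp a (by simp)
    subst ha
    rw [List.length_cons, List.replicate_succ]
    rw [← ih (fun x hx => hp x (by simp [hx]))]

/-! ### the forward word -/

def fword (A B : W) (k : ℕ) : W :=
  List.replicate k MStep.F ++ MStep.U :: (B ++ MStep.D :: A)

/-- the canonical `k` of a hump -/
def kOf (M : W) (i : ℕ) (h : IsHumpAt M i) : ℕ := Nat.find h

lemma kOf_spec (M : W) (i : ℕ) (h : IsHumpAt M i) :
    M[i]? = some MStep.U ∧ (∀ j < kOf M i h, M[i + 1 + j]? = some MStep.F) ∧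
      M[i + 1 + kOf M i h]? = some MStep.D := Nat.find_spec h

lemma kOf_eq (M : W) (i : ℕ) (h : IsHumpAt M i) (k : ℕ)
    (hF : ∀ j < k, M[i + 1 + j]? = some MStep.F) (hD : M[i + 1 + k]? = some MStep.D) :
    kOf M i h = k := by
  obtain ⟨hU', hF', hD'⟩ := kOf_spec M i h
  rcases lt_trichotomy (kOf M i h) k with hlt | heq | hgt
  · have := hF _ hlt; rw [this] at hD'; simp at hD'
  · exact heq
  · have := hF' _ hgt; rw [this] at hD; simp at hD

lemma hump_decomp (M : W) (i k : ℕ) (hU : M[i]? = some MStep.U)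
    (hF : ∀ j < k, M[i + 1 + j]? = some MStep.F) (hD : M[i + 1 + k]? = some MStep.D) :
    M = M.take i ++ MStep.U :: (List.replicate k MStep.F ++ MStep.D :: M.drop (i + k + 2)) := by
  conv_lhs => rw [← List.take_append_drop i M]
  rw [drop_of_getElem? M i MStep.U hU,
    drop_flat M (i+1) k (fun j hj => hF j hj),
    drop_of_getElem? M (i+1+k) MStep.D hD, show i + 1 + k + 1 = i + k + 2 by omega]

/-! ### the inverse parsing -/

lemma exists_argmax (t : W) : ∃ n, ∀ m, m ≤ t.length → δ (t.take m) ≤ δ (t.take n) := by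
  have H : ∀ L : ℕ, ∃ n, ∀ m, m ≤ L → δ (t.take m) ≤ δ (t.take n) := by
    intro L
    induction L with
    | zero => exact ⟨0, fun m hm => by rw [Nat.le_zero.mp hm]⟩
    | succ L ih =>
      obtain ⟨n, hn⟩ := ih
      by_cases h : δ (t.take (L+1)) ≤ δ (t.take n)
      · refine ⟨n, fun m hm => ?_⟩
        by_cases hm' : m ≤ L
        · exact hn m hm'
        · rw [show m = L + 1 by omega]; exact h
      · refine ⟨L+1, fun m hm => ?_⟩
        by_cases hm' : m ≤ L
        · exact (hn m hm').trans (le_of_not_ge h)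
        · rw [show m = L + 1 by omega]
  exact H t.length

def jOf (t : W) : ℕ := Nat.find (exists_argmax t)

lemma jOf_spec (t : W) : ∀ m, m ≤ t.length → δ (t.take m) ≤ δ (t.take (jOf t)) :=
  Nat.find_spec (exists_argmax t)

lemma jOf_spec' (t : W) : ∀ m, δ (t.take m) ≤ δ (t.take (jOf t)) := by
  intro m
  by_cases hm : m ≤ t.length
  · exact jOf_spec t m hm
  · rw [List.take_of_length_le (by omega)]
    have := jOf_spec t t.length le_rfl
    rwa [List.take_length] at this

lemma jOf_min (t : W) (n : ℕ) (hn : n < jOf t) :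
    δ (t.take n) < δ (t.take (jOf t)) := by
  have h := Nat.find_min (exists_argmax t) hn
  push_neg at h
  obtain ⟨m, hm, hlt⟩ := h
  exact lt_of_lt_of_le hlt (jOf_spec t m hm)

lemma jOf_eq (t : W) (j : ℕ)
    (h1 : ∀ m, m ≤ t.length → δ (t.take m) ≤ δ (t.take j))
    (h2 : ∀ n, n < j → δ (t.take n) < δ (t.take j)) : jOf t = j := by
  rcases lt_trichotomy (jOf t) j with hlt | heq | hgt
  · exact absurd (jOf_spec' t j) (not_le.mpr (h2 _ hlt))
  · exact heq
  · exfalso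
    have hlt := jOf_min t j hgt
    by_cases hlen : jOf t ≤ t.length
    · exact absurd (h1 _ hlen) (not_le.mpr hlt)
    · have e1 : t.take (jOf t) = t := List.take_of_length_le (by omega)
      rw [e1] at hlt
      have h3 := h1 t.length le_rfl
      rw [List.take_length] at h3
      omega

/-- components of the inverse map -/
def gu (w : W) : ℕ := (w.takeWhile (fun x => x == MStep.F)).length
def gt (w : W) : W := w.drop (gu w + 1)
def gB (w : W) : W := (gt w).take (jOf (gt w) - 1)
def gA (w : W) : W := (gt w).drop (jOf (gt w))
def gM (w : W) : W :=
  gA w ++ MStep.U :: (List.replicate (gu w) MStep.F ++ MStep.D :: gB w)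
def gI (w : W) : ℕ := (gA w).length

/-! ### structural facts about words of parts form -/

lemma parts_getElem (A B : W) (u : ℕ) :
    (A ++ MStep.U :: (List.replicate u MStep.F ++ MStep.D :: B))[A.length]? = some MStep.U ∧
    (∀ j < u, (A ++ MStep.U :: (List.replicate u MStep.F ++ MStep.D :: B))[A.length + 1 + j]?
      = some MStep.F) ∧
    (A ++ MStep.U :: (List.replicate u MStep.F ++ MStep.D :: B))[A.length + 1 + u]?
      = some MStep.D := by
  refine ⟨?_, ?_, ?_⟩
  · have := getElem?_add_append A (MStep.U :: (List.replicate u MStep.F ++ MStep.D :: B)) 0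
    simpa using this
  · intro j hj
    rw [show A.length + 1 + j = A.length + (1 + j) by omega, getElem?_add_append,
      show 1 + j = j + 1 by omega, List.getElem?_cons_succ, List.getElem?_append]
    simp [List.getElem?_replicate, hj]
  · rw [show A.length + 1 + u = A.length + (1 + u) by omega, getElem?_add_append,
      show 1 + u = u + 1 by omega, List.getElem?_cons_succ]
    have := getElem?_add_append (List.replicate u MStep.F) (MStep.D :: B) 0
    simpa using this

lemma parts_hump (A B : W) (u : ℕ) :
    IsHumpAt (A ++ MStep.U :: (List.replicate u MStep.F ++ MStep.D :: B)) A.length :=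
  ⟨u, (parts_getElem A B u).1, (parts_getElem A B u).2.1, (parts_getElem A B u).2.2⟩

lemma parts_δ (A B : W) (u : ℕ) :
    δ (A ++ MStep.U :: (List.replicate u MStep.F ++ MStep.D :: B)) = δ A + δ B := by
  rw [δ_append_cons, δ_append_cons, δ_U, δ_D, δ_replicateF]; ring

lemma parts_motzkin (A B : W) (u : ℕ)
    (hA0 : δ A ≤ 0)
    (hA : ∀ m, δ (A.take m) ≤ 0)
    (hB : ∀ m, δ (B.take m) ≤ -δ A)
    (hsum : δ A + δ B = 0) :
    IsMotzkin (A ++ MStep.U :: (List.replicate u MStep.F ++ MStep.D :: B)) := by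
  constructor
  · rw [super_iff_δ, parts_δ]; exact hsum
  · intro q hq
    have hδq : δ q ≤ 0 := by
      have hq' : q = (A ++ MStep.U :: (List.replicate u MStep.F ++ MStep.D :: B)).take q.length :=
        List.prefix_iff_eq_take.mp hq
      rw [hq']
      by_cases h1 : q.length ≤ A.length
      · rw [take_append_le _ _ _ h1]; exact hA q.length
      · obtain ⟨r, hr⟩ : ∃ r, q.length = A.length + (r + 1) := ⟨q.length - A.length - 1, by omega⟩
        rw [hr, take_append_add, List.take_succ_cons, δ_append_cons, δ_U]
        by_cases h2 : r ≤ u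
        · rw [take_append_le _ _ _ (by simpa using h2), List.take_replicate, δ_replicateF]
          omega
        · obtain ⟨s, hs⟩ : ∃ s, r = u + (s + 1) := ⟨r - u - 1, by omega⟩
          rw [hs, show u + (s+1) = (List.replicate u MStep.F).length + (s+1) by simp,
            take_append_add, List.take_succ_cons, δ_append_cons, δ_replicateF, δ_D]
          have := hB s
          omega
    unfold δ at hδq; omega

/-! ### core analysis of a word with defect 1 -/

lemma core (s : W) (hδs : δ s = 1) :
    s = s.take (jOf s - 1) ++ MStep.D :: s.drop (jOf s) ∧
    δ (s.drop (jOf s)) ≤ 0 ∧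
    (∀ m, δ ((s.drop (jOf s)).take m) ≤ 0) ∧
    (∀ m, δ ((s.take (jOf s - 1)).take m) ≤ -δ (s.drop (jOf s))) ∧
    δ (s.drop (jOf s)) + δ (s.take (jOf s - 1)) = 0 := by
  have hd1 : 1 ≤ δ (s.take (jOf s)) := by
    have := jOf_spec' s s.length
    rwa [List.take_length, hδs] at this
  have hj1 : 1 ≤ jOf s := by
    rcases Nat.eq_zero_or_pos (jOf s) with h | h
    · rw [h, List.take_zero, δ_nil] at hd1; omega
    · exact h
  have hjlen : jOf s ≤ s.length := by
    by_contra h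
    push_neg at h
    have h2 := jOf_min s (jOf s - 1) (by omega)
    have e1 : s.take (jOf s - 1) = s := List.take_of_length_le (by omega)
    have e2 : s.take (jOf s) = s := List.take_of_length_le (by omega)
    rw [e1, e2] at h2
    exact lt_irrefl _ h2
  have hjl : jOf s - 1 < s.length := by omega
  have htake : s.take (jOf s) = s.take (jOf s - 1) ++ [s[jOf s - 1]] := by
    conv_lhs => rw [show jOf s = (jOf s - 1) + 1 by omega]
    rw [List.take_succ, List.getElem?_eq_getElem hjl]
    rfl
  have hstep : δ (s.take (jOf s - 1)) < δ (s.take (jOf s)) := jOf_min s _ (by omega)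
  have hD : s[jOf s - 1] = MStep.D :=
    eq_D_of_δ_pos _ (by rw [htake, δ_append] at hstep; omega)
  have hdec : s = s.take (jOf s - 1) ++ MStep.D :: s.drop (jOf s) := by
    conv_lhs => rw [← List.take_append_drop (jOf s - 1) s]
    rw [List.drop_eq_getElem_cons hjl, hD, show jOf s - 1 + 1 = jOf s by omega]
  have hδBD : δ (s.take (jOf s - 1)) + 1 = δ (s.take (jOf s)) := by
    rw [htake, δ_append, hD, δ_D]
  have h0 : δ (s.take (jOf s - 1) ++ MStep.D :: s.drop (jOf s)) = 1 := by
    rw [← hdec]; exact hδs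
  rw [δ_append_cons, δ_D] at h0
  have hApref : ∀ m, δ ((s.drop (jOf s)).take m) ≤ 0 := by
    intro m
    have h1 : s.take (jOf s + m) = s.take (jOf s) ++ (s.drop (jOf s)).take m :=
      List.take_add
    have h2 := jOf_spec' s (jOf s + m)
    rw [h1, δ_append] at h2
    omega
  have hBpref : ∀ m, δ ((s.take (jOf s - 1)).take m) ≤ -δ (s.drop (jOf s)) := by
    intro m
    have h1 : (s.take (jOf s - 1)).take m = s.take (min m (jOf s - 1)) := List.take_take
    have h2 := jOf_min s (min m (jOf s - 1)) (by omega)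
    rw [← h1] at h2
    omega
  exact ⟨hdec, by omega, hApref, hBpref, by omega⟩

/-! ### the g-side specification -/

lemma g_spec (w : W) (hsup : IsSuperMotzkin w) (hfn : FirstNonFlatIsU w) :
    w = List.replicate (gu w) MStep.F ++ MStep.U :: gt w ∧
    gt w = gB w ++ MStep.D :: gA w ∧
    (gM w).length = w.length ∧
    IsMotzkin (gM w) ∧
    IsHumpAt (gM w) (gI w) := by
  obtain ⟨p, s, hw, hp⟩ := hfn
  have hu : gu w = p.length := by rw [gu, hw, takeWhile_flat p s hp]
  have hts : gt w = s := by
    rw [gt, hu, hw, show p ++ MStep.U :: s = (p ++ [MStep.U]) ++ s by simp]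
    exact drop_len_append _ _ _ (by simp)
  have hw2 : w = List.replicate (gu w) MStep.F ++ MStep.U :: gt w := by
    rw [hu, hts, ← flat_eq_replicate p hp, hw]
  have hδp : δ p = 0 := by
    rw [flat_eq_replicate p hp]; exact δ_replicateF _
  have hδs : δ s = 1 := by
    have hδw : δ w = 0 := (super_iff_δ w).mp hsup
    rw [hw, δ_append_cons, δ_U] at hδw
    omega
  obtain ⟨hdec, hA0, hApref, hBpref, hsum⟩ := core s hδs
  have hgB : gB w = s.take (jOf s - 1) := by rw [gB, hts]
  have hgA : gA w = s.drop (jOf s) := by rw [gA, hts]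
  refine ⟨hw2, ?_, ?_, ?_, ?_⟩
  · rw [hts, hgB, hgA]; exact hdec
  · have h1 := congrArg List.length hw
    have h2 := congrArg List.length hdec
    rw [gM, hgA, hgB, hu]
    simp only [List.length_append, List.length_cons, List.length_replicate] at h1 h2 ⊢
    omega
  · rw [gM, hgA, hgB]
    exact parts_motzkin _ _ _ hA0 hApref hBpref (by omega)
  · rw [gM, gI, hgA, hgB]
    exact parts_hump _ _ _

/-! ### the f-side specification -/

lemma f_spec (M : W) (i k : ℕ) (hM : IsMotzkin M)
    (hU : M[i]? = some MStep.U) (hF : ∀ j < k, M[i + 1 + j]? = some MStep.F)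
    (hD : M[i + 1 + k]? = some MStep.D) :
    (fword (M.take i) (M.drop (i + k + 2)) k).length = M.length ∧
    IsSuperMotzkin (fword (M.take i) (M.drop (i + k + 2)) k) ∧
    FirstNonFlatIsU (fword (M.take i) (M.drop (i + k + 2)) k) ∧
    gM (fword (M.take i) (M.drop (i + k + 2)) k) = M ∧
    gI (fword (M.take i) (M.drop (i + k + 2)) k) = i := by
  have hMdec := hump_decomp M i k hU hF hD
  have hilen : i < M.length := (List.getElem?_eq_some_iff.mp hU).1
  obtain ⟨A, hA⟩ : ∃ A, M.take i = A := ⟨_, rfl⟩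
  obtain ⟨B, hB⟩ : ∃ B, M.drop (i + k + 2) = B := ⟨_, rfl⟩
  rw [hA, hB] at hMdec ⊢
  have hlA : A.length = i := by rw [← hA, List.length_take]; omega
  have hu : gu (fword A B k) = k := by
    rw [fword, gu, takeWhile_flat _ _ (fun x hx => (List.mem_replicate.mp hx).2),
      List.length_replicate]
  have hts : gt (fword A B k) = B ++ MStep.D :: A := by
    rw [gt, hu, fword,
      show List.replicate k MStep.F ++ MStep.U :: (B ++ MStep.D :: A)
        = (List.replicate k MStep.F ++ [MStep.U]) ++ (B ++ MStep.D :: A) by simp]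
    exact drop_len_append _ _ _ (by simp)
  -- Motzkin facts
  have hδM : δ M = 0 := (super_iff_δ M).mp hM.1
  have hδsum : δ A + δ B = 0 := by
    rw [hMdec, parts_δ] at hδM; exact hδM
  have hAM : A <+: M := hA ▸ List.take_prefix i M
  have hApref : ∀ m, δ (A.take m) ≤ 0 := fun m =>
    prefix_δ_of_motzkin hM ((List.take_prefix m A).trans hAM)
  have hBpref : ∀ m, δ (B.take m) ≤ δ B := by
    intro m
    have hq : (A ++ MStep.U :: (List.replicate k MStep.F ++ MStep.D :: B.take m)) <+: M := by
      refine ⟨B.drop m, ?_⟩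
      conv_rhs => rw [hMdec,
        show B = B.take m ++ B.drop m from (List.take_append_drop m B).symm]
      simp
    have h2 := prefix_δ_of_motzkin hM hq
    rw [parts_δ] at h2
    omega
  -- values of δ on prefixes of B ++ D :: A
  have htm1 : ∀ m, m ≤ B.length → δ ((B ++ MStep.D :: A).take m) = δ (B.take m) := by
    intro m hm
    rw [take_append_le _ _ _ hm]
  have htB1 : δ ((B ++ MStep.D :: A).take (B.length + 1)) = δ B + 1 := by
    rw [take_append_add, List.take_succ_cons, List.take_zero, δ_append_cons, δ_D, δ_nil]
    ring
  have htm2 : ∀ m, δ ((B ++ MStep.D :: A).take (B.length + (m + 1)))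
      = δ B + 1 + δ (A.take m) := by
    intro m
    rw [take_append_add, List.take_succ_cons, δ_append_cons, δ_D]
  have hjeq : jOf (B ++ MStep.D :: A) = B.length + 1 := by
    apply jOf_eq
    · intro m _
      by_cases h1 : m ≤ B.length
      · rw [htm1 m h1, htB1]
        have := hBpref m; omega
      · obtain ⟨m', hm'⟩ : ∃ m', m = B.length + (m' + 1) := ⟨m - B.length - 1, by omega⟩
        rw [hm', htm2, htB1]
        have := hApref m'; omega
    · intro n hn
      have h1 : n ≤ B.length := by omega
      rw [htm1 n h1, htB1]
      have := hBpref n; omega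
  have hgB : gB (fword A B k) = B := by
    rw [gB, hts, hjeq, Nat.add_sub_cancel]
    exact take_len_append _ _ _ rfl
  have hgA : gA (fword A B k) = A := by
    rw [gA, hts, hjeq,
      show B ++ MStep.D :: A = (B ++ [MStep.D]) ++ A by simp]
    exact drop_len_append _ _ _ (by simp)
  refine ⟨?_, ?_, ?_, ?_, ?_⟩
  · rw [fword]
    conv_rhs => rw [hMdec]
    simp only [List.length_append, List.length_cons, List.length_replicate]
    omega
  · rw [super_iff_δ, fword, δ_append_cons, δ_U, δ_append_cons, δ_D, δ_replicateF]
    omega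
  · exact ⟨List.replicate k MStep.F, B ++ MStep.D :: A, rfl,
      fun x hx => (List.mem_replicate.mp hx).2⟩
  · rw [gM, hgA, hgB, hu, ← hMdec]
  · rw [gI, hgA, hlA]

/-! ### assembling the equivalence -/

noncomputable def theEquiv (n : ℕ) :
    {p : List MStep × ℕ // p.1.length = n ∧ IsMotzkin p.1 ∧ IsHumpAt p.1 p.2} ≃
      {w : List MStep // w.length = n ∧ IsSuperMotzkin w ∧ FirstNonFlatIsU w} where
  toFun p :=
    ⟨fword (p.1.1.take p.1.2) (p.1.1.drop (p.1.2 + kOf p.1.1 p.1.2 p.2.2.2 + 2))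
        (kOf p.1.1 p.1.2 p.2.2.2), by
      obtain ⟨hU, hF, hD⟩ := kOf_spec p.1.1 p.1.2 p.2.2.2
      obtain ⟨h1, h2, h3, _, _⟩ := f_spec p.1.1 p.1.2 _ p.2.2.1 hU hF hD
      exact ⟨by rw [h1, p.2.1], h2, h3⟩⟩
  invFun w :=
    ⟨(gM w.1, gI w.1), by
      obtain ⟨_, _, h3, h4, h5⟩ := g_spec w.1 w.2.2.1 w.2.2.2
      exact ⟨by rw [h3, w.2.1], h4, h5⟩⟩
  left_inv := by
    rintro ⟨⟨M, i⟩, hlen, hM, hh⟩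
    apply Subtype.ext
    obtain ⟨hU, hF, hD⟩ := kOf_spec M i hh
    obtain ⟨_, _, _, h4, h5⟩ := f_spec M i _ hM hU hF hD
    simp only
    rw [h4, h5]
  right_inv := by
    rintro ⟨w, hlen, hsup, hfn⟩
    apply Subtype.ext
    obtain ⟨hw2, hdect, _, _, hhump⟩ := g_spec w hsup hfn
    simp only
    have hk : kOf (gM w) (gI w) hhump = gu w := by
      apply kOf_eq
      · rw [gM, gI]; exact (parts_getElem _ _ _).2.1
      · rw [gM, gI]; exact (parts_getElem _ _ _).2.2
    rw [hk]
    have htake : (gM w).take (gI w) = gA w := by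
      rw [gM, gI]; exact take_len_append _ _ _ rfl
    have hdrop : (gM w).drop (gI w + gu w + 2) = gB w := by
      rw [gM, gI,
        show gA w ++ MStep.U :: (List.replicate (gu w) MStep.F ++ MStep.D :: gB w)
          = (gA w ++ MStep.U :: (List.replicate (gu w) MStep.F ++ [MStep.D])) ++ gB w by simp]
      apply drop_len_append
      simp only [List.length_append, List.length_cons, List.length_replicate,
        List.length_nil]
      omega
    rw [htake, hdrop, fword, ← hdect, ← hw2]

end HumpBij

theorem humps_equiv_superMotzkin_firstU (n : ℕ) :
    Nonempty
      ({p : List MStep × ℕ // p.1.length = n ∧ IsMotzkin p.1 ∧ IsHumpAt p.1 p.2} ≃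
        {w : List MStep // w.length = n ∧ IsSuperMotzkin w ∧ FirstNonFlatIsU w}) :=
  ⟨HumpBij.theEquiv n⟩
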